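/- arXiv:2005.13101 — 4 statements merged into one kernel-verified Lean document; each statement's English description precedes it below -/
import Mathlib

section
/- Let e : ℝ → ℝ² (Euclidean space) be differentiable and let λ, Ā, W̄ > 0 with Λ := λ - 2Ā > 0. Suppose that for all t ≥ 0, ⟪e(t), e'(t)⟫ ≤ -(λ/2)‖e(t)‖² + ‖e(t)‖(Ā‖e(t)‖ + W̄). If ‖e(0)‖ ≤ B_r := 2W̄/Λ, then ‖e(t)‖ ≤ B_r for all t ≥ 0; that is, the ball of radius B_r = 2W̄/Λ is forward invariant for the tracking error (Theorem 1, uniform ultimate boundedness). -/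
open RealInnerProductSpace

/-- Theorem 1, uniform ultimate boundedness: Under the pointwise min-norm
control law, along the tracking-error trajectory satisfying the dissipation inequality
`⟪e, e'⟫ ≤ -(λ/2)‖e‖² + ‖e‖(Ā‖e‖ + W̄)` with `Λ = λ - 2Ā > 0`, the ball of radius
`B_r = 2W̄/Λ` is forward invariant: if `‖e 0‖ ≤ B_r` then `‖e t‖ ≤ B_r` for all `t ≥ 0`. -/
theorem rclf_ball_forward_invariant
    (lam A W : ℝ) (hlam : 0 < lam) (hA : 0 < A) (hW : 0 < W)
    (hΛ : 0 < lam - 2 * A)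
    (e : ℝ → EuclideanSpace ℝ (Fin 2)) (hdiff : Differentiable ℝ e)
    (hdiss : ∀ t ≥ (0:ℝ),
      ⟪e t, deriv e t⟫ ≤ -(lam / 2) * ‖e t‖ ^ 2 + ‖e t‖ * (A * ‖e t‖ + W))
    (h0 : ‖e 0‖ ≤ 2 * W / (lam - 2 * A)) :
    ∀ t ≥ (0:ℝ), ‖e t‖ ≤ 2 * W / (lam - 2 * A) := by
  intro t ht
  set Λ : ℝ := lam - 2 * A with hΛdef
  set B : ℝ := 2 * W / Λ with hBdef
  have hB : 0 < B := by positivity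
  -- the squared norm and its derivative
  set g : ℝ → ℝ := fun s => ‖e s‖ ^ 2 with hgdef
  set g' : ℝ → ℝ := fun s => 2 * ⟪e s, deriv e s⟫ with hg'def
  have hg : ∀ s, HasDerivAt g (g' s) s := fun s =>
    ((hdiff s).hasDerivAt).norm_sq
  set K : ℝ := -(Λ / 2) with hKdef
  set ε : ℝ := Λ / 2 * B ^ 2 with hεdef
  -- Gronwall bound on [0, t]
  have key : ∀ x ∈ Set.Icc (0:ℝ) t, g x ≤ gronwallBound (B ^ 2) K ε (x - 0) := by
    apply le_gronwallBound_of_liminf_deriv_right_le (f' := g')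
    · exact fun s _ => ((hg s).continuousAt).continuousWithinAt
    · intro x _ r hr
      have := ((hg x).hasDerivWithinAt (s := Set.Ici x)).liminf_right_slope_le hr
      refine this.mono fun z hz => ?_
      rwa [slope_def_field, div_eq_inv_mul] at hz
    · simp only [hgdef]
      have h0' : (0:ℝ) ≤ ‖e 0‖ := norm_nonneg _
      nlinarith
    · intro x hx
      have hd := hdiss x hx.1
      have hn : (0:ℝ) ≤ ‖e x‖ := norm_nonneg _
      have hBW : W = Λ / 2 * B := by rw [hBdef]; field_simp <;> ring
      have hsq : (0:ℝ) ≤ (Λ * ‖e x‖ - 2 * W) ^ 2 := sq_nonneg _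
      simp only [hg'def, hgdef, hKdef, hεdef, hBdef]
      have hΛ' : (0:ℝ) < Λ := hΛ
      rw [div_pow]
      have h2W : 2 * W * ‖e x‖ ≤ Λ / 2 * ‖e x‖ ^ 2 + Λ / 2 * ((2 * W) ^ 2 / Λ ^ 2) := by
        have h1 : Λ / 2 * ((2 * W) ^ 2 / Λ ^ 2) = 2 * W ^ 2 / Λ := by
          field_simp
        rw [h1, ← sub_nonneg]
        have h2 : Λ / 2 * ‖e x‖ ^ 2 + 2 * W ^ 2 / Λ - 2 * W * ‖e x‖
            = (Λ * ‖e x‖ - 2 * W) ^ 2 / (2 * Λ) := by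
          field_simp; ring
        rw [h2]; positivity
      nlinarith
  have hgt := key t ⟨ht, le_refl t⟩
  have hKne : K ≠ 0 := by simp only [hKdef]; intro h; nlinarith
  rw [gronwallBound_of_K_ne_0 hKne] at hgt
  have hε_div : ε / K = -(B ^ 2) := by
    simp only [hεdef, hKdef]
    rw [div_neg, mul_comm, mul_div_assoc, div_self (by positivity : Λ / 2 ≠ 0), mul_one]
  rw [hε_div] at hgt
  have hgt' : g t ≤ B ^ 2 := by
    have := hgt
    ring_nf at this ⊢
    nlinarith [Real.exp_pos (K * (t - 0))]
  have : ‖e t‖ ^ 2 ≤ B ^ 2 := hgt'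
  nlinarith [norm_nonneg (e t)]
end

section
/- Let e : ℝ → ℝ² (Euclidean space) be differentiable, let λ, Ā, W̄ > 0 with Λ := λ - 2Ā > 0, and let K_r be a robust gain with 0 < K_r < W̄. Suppose that for all t ≥ 0 the robust closed-loop dissipation inequality ⟪e(t), e'(t)⟫ ≤ -(λ/2)‖e(t)‖² + ‖e(t)‖(Ā‖e(t)‖ + W̄) - K_r‖e(t)‖ holds. Then for every t ≥ 0 with ‖e(t)‖ > 2(W̄ - K_r)/Λ, the function V(t) := ½‖e(t)‖² has strictly negative derivative at t, i.e., d/dt V(t) ≤ -(Λ/2)‖e(t)‖² + (W̄ - K_r)‖e(t)‖ < 0. -/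
open RealInnerProductSpace

/-- inside Theorem 2, Case 1: Under the robust pointwise min-norm control
law with robust gain `0 < K_r < W̄`, along the tracking-error trajectory satisfying
`⟪e, e'⟫ ≤ -(λ/2)‖e‖² + ‖e‖(Ā‖e‖ + W̄) - K_r‖e‖`, whenever `‖e t‖ > 2(W̄ - K_r)/Λ`
(with `Λ = λ - 2Ā > 0`), the Lyapunov function `V = ½‖e‖²` has strictly negative
derivative: `V' ≤ -(Λ/2)‖e‖² + (W̄ - K_r)‖e‖ < 0`. -/
theorem robust_rclf_strictly_negative_outside_ball
    (lam A W Kr : ℝ) (hlam : 0 < lam) (hA : 0 < A) (hW : 0 < W)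
    (hΛ : 0 < lam - 2 * A) (hKr0 : 0 < Kr) (hKrW : Kr < W)
    (e : ℝ → EuclideanSpace ℝ (Fin 2)) (hdiff : Differentiable ℝ e)
    (hdiss : ∀ t ≥ (0:ℝ),
      ⟪e t, deriv e t⟫ ≤ -(lam / 2) * ‖e t‖ ^ 2 + ‖e t‖ * (A * ‖e t‖ + W) - Kr * ‖e t‖) :
    ∀ t ≥ (0:ℝ), 2 * (W - Kr) / (lam - 2 * A) < ‖e t‖ →
      deriv (fun s => (1 / 2 : ℝ) * ‖e s‖ ^ 2) t ≤
        -((lam - 2 * A) / 2) * ‖e t‖ ^ 2 + (W - Kr) * ‖e t‖ ∧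
      -((lam - 2 * A) / 2) * ‖e t‖ ^ 2 + (W - Kr) * ‖e t‖ < 0 := by
  intro t ht hball
  have hd : HasDerivAt (fun s => (1 / 2 : ℝ) * ‖e s‖ ^ 2) ⟪e t, deriv e t⟫ t := by
    have h1 : HasDerivAt e (deriv e t) t := (hdiff t).hasDerivAt
    have h2 : HasDerivAt (fun s => ⟪e s, e s⟫) (⟪e t, deriv e t⟫ + ⟪deriv e t, e t⟫) t :=
      h1.inner ℝ h1
    have h3 := h2.const_mul (1 / 2 : ℝ)
    have heq : (fun s => (1 / 2 : ℝ) * ⟪e s, e s⟫) = fun s => (1 / 2 : ℝ) * ‖e s‖ ^ 2 := by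
      funext s; rw [real_inner_self_eq_norm_sq]
    rw [heq] at h3
    refine h3.congr_deriv ?_
    rw [real_inner_comm (deriv e t) (e t)]
    ring
  rw [hd.deriv]
  constructor
  · have := hdiss t ht
    nlinarith [norm_nonneg (e t)]
  · have hpos : 0 < ‖e t‖ := lt_of_le_of_lt (div_nonneg (by linarith) hΛ.le) hball
    have h2 : 2 * (W - Kr) < (lam - 2 * A) * ‖e t‖ := by
      rw [div_lt_iff₀ hΛ] at hball; linarith
    nlinarith
end

section
/- (Theorem 2, Case 1: uniform ultimate boundedness.) Let e : ℝ → ℝ² (Euclidean space) be differentiable, let λ, Ā, W̄ > 0 with Λ := λ - 2Ā > 0, and let 0 < K_r < W̄. Suppose that for all t ≥ 0, ⟪e(t), e'(t)⟫ ≤ -(λ/2)‖e(t)‖² + ‖e(t)‖(Ā‖e(t)‖ + W̄) - K_r‖e(t)‖. If ‖e(0)‖ ≤ B_rob := 2(W̄ - K_r)/Λ, then ‖e(t)‖ ≤ B_rob for all t ≥ 0; in particular, the robust term with gain K_r strictly shrinks the ultimate bound from 2W̄/Λ to 2(W̄ - K_r)/Λ. -/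
open RealInnerProductSpace

/-- Theorem 2, Case 1: uniform ultimate boundedness: Under the robust
pointwise min-norm control law with robust gain `0 < K_r < W̄`, along the tracking-error
trajectory satisfying `⟪e, e'⟫ ≤ -(λ/2)‖e‖² + ‖e‖(Ā‖e‖ + W̄) - K_r‖e‖` with
`Λ = λ - 2Ā > 0`, the ball of radius `B_rob = 2(W̄ - K_r)/Λ` is forward invariant:
if `‖e 0‖ ≤ B_rob` then `‖e t‖ ≤ B_rob` for all `t ≥ 0`. In particular the robust term
strictly shrinks the ultimate bound from `2W̄/Λ` to `2(W̄ - K_r)/Λ`. -/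
theorem robust_rclf_ball_forward_invariant
    (lam A W Kr : ℝ) (hlam : 0 < lam) (hA : 0 < A) (hW : 0 < W)
    (hΛ : 0 < lam - 2 * A) (hKr0 : 0 < Kr) (hKrW : Kr < W)
    (e : ℝ → EuclideanSpace ℝ (Fin 2)) (hdiff : Differentiable ℝ e)
    (hdiss : ∀ t ≥ (0:ℝ),
      ⟪e t, deriv e t⟫ ≤ -(lam / 2) * ‖e t‖ ^ 2 + ‖e t‖ * (A * ‖e t‖ + W) - Kr * ‖e t‖)
    (h0 : ‖e 0‖ ≤ 2 * (W - Kr) / (lam - 2 * A)) :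
    (∀ t ≥ (0:ℝ), ‖e t‖ ≤ 2 * (W - Kr) / (lam - 2 * A)) ∧
    2 * (W - Kr) / (lam - 2 * A) < 2 * W / (lam - 2 * A) := by
  set B : ℝ := 2 * (W - Kr) / (lam - 2 * A) with hBdef
  have hBpos : 0 < B := div_pos (by linarith) hΛ
  have hBeq : (lam - 2 * A) * B = 2 * (W - Kr) := by
    rw [hBdef, mul_div_assoc']; exact mul_div_cancel_left₀ _ (ne_of_gt hΛ)
  constructor
  · intro t ht
    set f : ℝ → ℝ := fun s => ‖e s‖ ^ 2 with hfdef
    have hf' : ∀ x, HasDerivAt f (2 * ⟪e x, deriv e x⟫) x := by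
      intro x
      have h := ((hdiff x).hasDerivAt.inner ℝ (hdiff x).hasDerivAt)
      have heq : (fun s => ⟪e s, e s⟫) = f := by
        funext s; exact real_inner_self_eq_norm_sq (e s)
      rw [heq] at h
      rw [show (2:ℝ) * ⟪e x, deriv e x⟫ = ⟪e x, deriv e x⟫ + ⟪deriv e x, e x⟫ by
        rw [real_inner_comm (e x) (deriv e x)]; ring]
      exact h
    have key : f t ≤ B ^ 2 := by
      apply le_of_forall_pos_le_add
      intro ε hε
      have hcont : ContinuousOn f (Set.Icc 0 t) :=
        fun x _ => ((hf' x).continuousAt).continuousWithinAt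
      have hderiv : ∀ x ∈ Set.Ico (0:ℝ) t,
          HasDerivWithinAt f (2 * ⟪e x, deriv e x⟫) (Set.Ici x) x :=
        fun x _ => (hf' x).hasDerivWithinAt
      have ha : f 0 ≤ B ^ 2 + ε := by
        have hf0 : f 0 = ‖e 0‖ ^ 2 := rfl
        nlinarith [norm_nonneg (e 0)]
      have hBd : ∀ x : ℝ, HasDerivAt (fun _ : ℝ => B ^ 2 + ε) 0 x :=
        fun x => hasDerivAt_const x _
      have hbound : ∀ x ∈ Set.Ico (0:ℝ) t, f x = B ^ 2 + ε →
          2 * ⟪e x, deriv e x⟫ < 0 := by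
        intro x hx hfx
        have hx0 : (0:ℝ) ≤ x := hx.1
        have hfx' : ‖e x‖ ^ 2 = B ^ 2 + ε := hfx
        have hbig : B < ‖e x‖ := by
          nlinarith [norm_nonneg (e x)]
        have hd := hdiss x hx0
        have hn : 0 < ‖e x‖ := lt_trans hBpos hbig
        have hprod : 0 < (lam - 2 * A) * (‖e x‖ * (‖e x‖ - B)) :=
          mul_pos hΛ (mul_pos hn (by linarith))
        have h2 : (lam - 2 * A) * B * ‖e x‖ = 2 * (W - Kr) * ‖e x‖ := by
          rw [hBeq]
        nlinarith [hd, hprod, h2]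
      have main := image_le_of_deriv_right_lt_deriv_boundary hcont hderiv ha hBd hbound
      have := main (Set.right_mem_Icc.mpr ht)
      linarith
    have hkey : ‖e t‖ ^ 2 ≤ B ^ 2 := key
    nlinarith [norm_nonneg (e t)]
  · rw [div_lt_div_iff_of_pos_right hΛ]
    linarith
end

section
/- (Theorem 2, Case 1: ultimate bound in the limit.) Let e : ℝ → ℝ² (Euclidean space) be differentiable, let λ, Ā, W̄ > 0 with Λ := λ - 2Ā, Λ̄ := Λ - 1 > 0, and let 0 < K_r < W̄. Suppose that for all t ≥ 0, ⟪e(t), e'(t)⟫ ≤ -(λ/2)‖e(t)‖² + ‖e(t)‖(Ā‖e(t)‖ + W̄) - K_r‖e(t)‖. Then for every ε > 0 there exists T ≥ 0 such that ‖e(t)‖ ≤ (W̄ - K_r)/√Λ̄ + ε for all t ≥ T. -/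
open RealInnerProductSpace

/-- Theorem 2, Case 1: ultimate bound in the limit: Under the robust
pointwise min-norm control law with robust gain `0 < K_r < W̄`, along the tracking-error
trajectory satisfying `⟪e, e'⟫ ≤ -(λ/2)‖e‖² + ‖e‖(Ā‖e‖ + W̄) - K_r‖e‖` with
`Λ̄ = λ - 2Ā - 1 > 0`, for every `ε > 0` there exists `T ≥ 0` such that
`‖e t‖ ≤ (W̄ - K_r)/√Λ̄ + ε` for all `t ≥ T`. -/
theorem robust_rclf_uniform_ultimate_bound
    (lam A W Kr : ℝ) (hlam : 0 < lam) (hA : 0 < A) (hW : 0 < W)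
    (hΛbar : 0 < lam - 2 * A - 1) (hKr0 : 0 < Kr) (hKrW : Kr < W)
    (e : ℝ → EuclideanSpace ℝ (Fin 2)) (hdiff : Differentiable ℝ e)
    (hdiss : ∀ t ≥ (0:ℝ),
      ⟪e t, deriv e t⟫ ≤ -(lam / 2) * ‖e t‖ ^ 2 + ‖e t‖ * (A * ‖e t‖ + W) - Kr * ‖e t‖) :
    ∀ ε > (0:ℝ), ∃ T ≥ (0:ℝ), ∀ t ≥ T,
      ‖e t‖ ≤ (W - Kr) / Real.sqrt (lam - 2 * A - 1) + ε := by
  intro ε hε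
  set L := lam - 2 * A - 1 with hLdef
  have hLpos : 0 < L := hΛbar
  set c := (W - Kr) ^ 2 with hcdef
  have hcpos : 0 < c := pow_pos (by linarith) 2
  -- derivative of V = ‖e‖²
  have hVd : ∀ t : ℝ, HasDerivAt (fun s => ‖e s‖ ^ 2) (2 * ⟪e t, deriv e t⟫) t := by
    intro t
    have h := ((hdiff t).hasDerivAt).inner ℝ ((hdiff t).hasDerivAt)
    have heq : (fun s => ⟪e s, e s⟫) = fun s => ‖e s‖ ^ 2 := by
      funext s; rw [real_inner_self_eq_norm_sq]
    rw [heq] at h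
    have : ⟪e t, deriv e t⟫ + ⟪deriv e t, e t⟫ = 2 * ⟪e t, deriv e t⟫ := by
      rw [real_inner_comm (deriv e t) (e t)]; ring
    rwa [this] at h
  -- the auxiliary function g
  set g := fun t => Real.exp (L * t) * (‖e t‖ ^ 2 - c / L) with hgdef
  have hgd : ∀ t : ℝ, HasDerivAt g
      (Real.exp (L * t) * (L * (‖e t‖ ^ 2 - c / L) + 2 * ⟪e t, deriv e t⟫)) t := by
    intro t
    have h1 : HasDerivAt (fun s => Real.exp (L * s)) (Real.exp (L * t) * L) t := by
      have := (Real.hasDerivAt_exp (L * t)).comp t ((hasDerivAt_id t).const_mul L)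
      simpa [Function.comp_def] using this
    have h2 : HasDerivAt (fun s => ‖e s‖ ^ 2 - c / L) (2 * ⟪e t, deriv e t⟫) t :=
      (hVd t).sub_const _
    have := h1.mul h2
    exact this.congr_deriv (by ring)
  have hgdiff : Differentiable ℝ g := fun t => (hgd t).differentiableAt
  -- g is antitone on [0, ∞)
  have hanti : AntitoneOn g (Set.Ici (0:ℝ)) := by
    apply antitoneOn_of_deriv_nonpos (convex_Ici 0) hgdiff.continuous.continuousOn
      (fun t _ => (hgdiff t).differentiableWithinAt)
    intro t ht
    rw [interior_Ici] at ht
    have ht0 : (0:ℝ) ≤ t := le_of_lt ht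
    rw [(hgd t).deriv]
    have hd := hdiss t ht0
    have hc' : L * (c / L) = c := by field_simp
    have key : L * (‖e t‖ ^ 2 - c / L) + 2 * ⟪e t, deriv e t⟫ ≤ 0 := by
      nlinarith [norm_nonneg (e t), sq_nonneg (‖e t‖ - (W - Kr))]
    exact mul_nonpos_of_nonneg_of_nonpos (Real.exp_pos _).le key
  -- exponential bound on V
  set K := |‖e 0‖ ^ 2 - c / L| + 1 with hKdef
  have hKpos : 0 < K := by positivity
  have hbound : ∀ t ≥ (0:ℝ), ‖e t‖ ^ 2 ≤ c / L + K * Real.exp (-(L * t)) := by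
    intro t ht
    have hg0 : g t ≤ g 0 := hanti (Set.self_mem_Ici) ht ht
    have hgt : g t = Real.exp (L * t) * (‖e t‖ ^ 2 - c / L) := rfl
    have hg0' : g 0 = ‖e 0‖ ^ 2 - c / L := by simp [hgdef]
    have hle : Real.exp (L * t) * (‖e t‖ ^ 2 - c / L) ≤ K := by
      rw [← hgt]
      calc g t ≤ g 0 := hg0
        _ = ‖e 0‖ ^ 2 - c / L := hg0'
        _ ≤ |‖e 0‖ ^ 2 - c / L| := le_abs_self _
        _ ≤ K := by rw [hKdef]; linarith
    have hep : 0 < Real.exp (L * t) := Real.exp_pos _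
    have hen : Real.exp (-(L * t)) * Real.exp (L * t) = 1 := by
      rw [← Real.exp_add]; simp
    have h := mul_le_mul_of_nonneg_right hle (Real.exp_pos (-(L * t))).le
    have heq : Real.exp (L * t) * (‖e t‖ ^ 2 - c / L) * Real.exp (-(L * t))
        = ‖e t‖ ^ 2 - c / L := by
      rw [mul_comm, ← mul_assoc, hen, one_mul]
    rw [heq] at h
    linarith
  -- choose T
  set T := max 0 (Real.log (K / ε ^ 2) / L) with hTdef
  refine ⟨T, le_max_left _ _, ?_⟩
  intro t ht
  have hT0 : (0:ℝ) ≤ T := le_max_left _ _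
  have ht0 : (0:ℝ) ≤ t := le_trans hT0 ht
  -- K * exp(-(L t)) ≤ ε²
  have hKt : K * Real.exp (-(L * t)) ≤ ε ^ 2 := by
    have h1 : Real.log (K / ε ^ 2) / L ≤ t := le_trans (le_max_right _ _) ht
    have h2 : Real.log (K / ε ^ 2) ≤ L * t := by
      rw [div_le_iff₀ hLpos] at h1; linarith
    have h3 : K / ε ^ 2 ≤ Real.exp (L * t) := by
      have := Real.exp_le_exp.mpr h2
      rwa [Real.exp_log (by positivity : (0:ℝ) < K / ε ^ 2)] at this
    have h4 : K ≤ ε ^ 2 * Real.exp (L * t) := by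
      rw [div_le_iff₀ (by positivity : (0:ℝ) < ε ^ 2)] at h3; linarith
    have hen : Real.exp (-(L * t)) * Real.exp (L * t) = 1 := by
      rw [← Real.exp_add]; simp
    nlinarith [mul_le_mul_of_nonneg_right h4 (Real.exp_pos (-(L * t))).le]
  have hb : ‖e t‖ ^ 2 ≤ c / L + ε ^ 2 := le_trans (hbound t ht0) (add_le_add_right hKt _)
  -- sqrt computations
  have hWK : (0:ℝ) ≤ W - Kr := by linarith
  have hsL : 0 < Real.sqrt L := Real.sqrt_pos.mpr hLpos
  set s := (W - Kr) / Real.sqrt L with hsdef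
  have hs0 : 0 ≤ s := by positivity
  have hs2 : s ^ 2 = c / L := by
    rw [hsdef, div_pow, Real.sq_sqrt hLpos.le, hcdef]
  have : ‖e t‖ ^ 2 ≤ s ^ 2 + ε ^ 2 := by rw [hs2]; exact hb
  nlinarith [norm_nonneg (e t), mul_nonneg hs0 hε.le]
end
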